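/- Let n ≥ 2 and ε > 0. Let x ∈ ℝⁿ satisfy ‖x − (1+ε)eₙ‖ = 1 and ‖x‖ ≤ 1/2, and suppose u : ℝⁿ → ℝ is differentiable at x with ⟨∇u(x), x − (1+ε)eₙ⟩ = 0. Then |∂ₙu(x)| ≤ 2 |x'| ‖∇u(x)‖, where |x'| = √(x₁² + ⋯ + x_{n−1}²). -/

import Mathlib

open scoped RealInnerProductSpace

/-- The pointwise boundary estimate of Corollary 4.2: if `x` lies on the sphere
`∂B⁺ = {x : ‖x − (1+ε)eₙ‖ = 1}` with `‖x‖ ≤ 1/2`, and `u` is differentiable at `x` with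
the Neumann condition `⟨∇u(x), x − (1+ε)eₙ⟩ = 0`, then
`|∂ₙu(x)| ≤ 2 |x'| ‖∇u(x)‖`. -/
theorem neumann_vertical_derivative_bound (n : ℕ) (hn : 2 ≤ n) (ε : ℝ) (hε : 0 < ε)
    (x : EuclideanSpace ℝ (Fin n))
    (hxS : ‖x - (1 + ε) • EuclideanSpace.single (⟨n - 1, by omega⟩ : Fin n) (1 : ℝ)‖ = 1)
    (hxsmall : ‖x‖ ≤ 1 / 2)
    (u : EuclideanSpace ℝ (Fin n) → ℝ) (hu : DifferentiableAt ℝ u x)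
    (hNeu : ⟪gradient u x,
      x - (1 + ε) • EuclideanSpace.single (⟨n - 1, by omega⟩ : Fin n) (1 : ℝ)⟫ = 0) :
    |fderiv ℝ u x (EuclideanSpace.single (⟨n - 1, by omega⟩ : Fin n) (1 : ℝ))| ≤
      2 * Real.sqrt (∑ i ∈ Finset.univ.erase (⟨n - 1, by omega⟩ : Fin n), (x i) ^ 2) *
        ‖gradient u x‖ := by
  set k : Fin n := ⟨n - 1, by omega⟩ with hk
  set g : EuclideanSpace ℝ (Fin n) := gradient u x with hg
  have hfd : fderiv ℝ u x (EuclideanSpace.single k (1 : ℝ)) = g k := by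
    have h : ⟪g, EuclideanSpace.single k (1 : ℝ)⟫
        = fderiv ℝ u x (EuclideanSpace.single k (1 : ℝ)) := by
      rw [hg]; exact InnerProductSpace.toDual_symm_apply
    rw [← h, EuclideanSpace.inner_single_right]; simp
  rw [hfd]
  have hexp : g k * (x k - (1 + ε)) = -(∑ i ∈ Finset.univ.erase k, g i * x i) := by
    have h1 : ⟪g, x - (1 + ε) • EuclideanSpace.single k (1 : ℝ)⟫
        = (∑ i, g i * x i) - (1 + ε) * g k := by
      rw [inner_sub_right, real_inner_smul_right, EuclideanSpace.inner_single_right]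
      simp [PiLp.inner_apply, RCLike.inner_apply]
      exact Finset.sum_congr rfl (fun i _ => mul_comm _ _)
    have h2 : (∑ i, g i * x i) = g k * x k + ∑ i ∈ Finset.univ.erase k, g i * x i :=
      (Finset.add_sum_erase _ _ (Finset.mem_univ k)).symm
    have h0 : (∑ i, g i * x i) - (1 + ε) * g k = 0 := by rw [← h1]; exact hNeu
    rw [h2] at h0; linarith
  have hxk : |x k| ≤ 1 / 2 := by
    have h := abs_real_inner_le_norm x (EuclideanSpace.single k (1 : ℝ))
    rw [EuclideanSpace.inner_single_right, EuclideanSpace.norm_single] at h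
    simp only [mul_one, norm_one, one_mul, RCLike.conj_to_real] at h
    exact h.trans hxsmall
  have hνk : (1 / 2 : ℝ) ≤ |x k - (1 + ε)| := by
    have hx2 : x k ≤ 1 / 2 := le_of_abs_le hxk
    rw [abs_of_nonpos (by linarith)]; linarith
  set S := Real.sqrt (∑ i ∈ Finset.univ.erase k, (x i) ^ 2) with hS
  have hSnn : 0 ≤ S := Real.sqrt_nonneg _
  have hgnn : (0 : ℝ) ≤ ‖g‖ := norm_nonneg _
  have hGle : Real.sqrt (∑ i ∈ Finset.univ.erase k, (g i) ^ 2) ≤ ‖g‖ := by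
    rw [EuclideanSpace.norm_eq]
    apply Real.sqrt_le_sqrt
    calc ∑ i ∈ Finset.univ.erase k, (g i) ^ 2 ≤ ∑ i, (g i) ^ 2 :=
          Finset.sum_le_sum_of_subset_of_nonneg (Finset.subset_univ _)
            (fun i _ _ => by positivity)
    _ = ∑ i, ‖g i‖ ^ 2 := by simp [Real.norm_eq_abs, sq_abs]
  have hCS : |∑ i ∈ Finset.univ.erase k, g i * x i| ≤ ‖g‖ * S := by
    have hb : |∑ i ∈ Finset.univ.erase k, g i * x i|
        ≤ Real.sqrt (∑ i ∈ Finset.univ.erase k, (g i) ^ 2) * S := by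
      rw [abs_le]
      constructor
      · have h := Real.sum_mul_le_sqrt_mul_sqrt (Finset.univ.erase k)
          (fun i => -g i) (fun i => x i)
        have he1 : ∑ i ∈ Finset.univ.erase k, -g i * x i
            = -∑ i ∈ Finset.univ.erase k, g i * x i := by
          rw [← Finset.sum_neg_distrib]; apply Finset.sum_congr rfl; intro i _; ring
        have he2 : ∑ i ∈ Finset.univ.erase k, (-g i) ^ 2
            = ∑ i ∈ Finset.univ.erase k, (g i) ^ 2 := by
          apply Finset.sum_congr rfl; intro i _; ring
        simp only [he1, he2] at h
        linarith
      · exact Real.sum_mul_le_sqrt_mul_sqrt (Finset.univ.erase k) (fun i => g i) (fun i => x i)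
    exact hb.trans (mul_le_mul_of_nonneg_right hGle hSnn)
  have hkey : |g k| * |x k - (1 + ε)| ≤ ‖g‖ * S := by
    rw [← abs_mul, hexp, abs_neg]; exact hCS
  nlinarith [abs_nonneg (g k), mul_le_mul_of_nonneg_left hνk (abs_nonneg (g k))]
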